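/- Let m ≥ 2 and p ≥ 2 be integers, and let (k, a, b) and (k′, a′, b′) be triples of nonnegative integers satisfying: b ≤ a ≤ m, 2b ≤ min(p − k, 4m − p − k), 2a ≤ min(p + k, 4m − p + k); b′ ≤ a′ ≤ m, 2b′ ≤ min(p + 1 − k′, 4m − p − 1 − k′), 2a′ ≤ min(p + 1 + k′, 4m − p − 1 + k′); |k − k′| = 1 and |a − a′| + |b − b′| = 1. Set j := −k(k+2), j′ := −k′(k′+2), c := P(k, a, b, p), c′ := P(k′, a′, b′, p+1), and suppose the system (p+1)(j+3) = (p−1)j′, (p+1)c = (p−1)c′, −2c′ + j′ + 3(p+1) = 0 holds. Then k = 1, k′ = 0, b′ = b, a′ = a − 1, 4m − p = 2a − 1, and in particular p ≥ 2m + 1. (This is the complete numerical analysis of system (sys1)–(eq1) in the proof that every Killing p-form, p ≥ 2, on a compact quaternion-Kähler manifold is parallel: every solution compatible with the constraints of Lemmas 3.1 and 3.2 falls into the single case that is excluded by the geometric argument using the Kraines form.) -/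
import Mathlib


/-!
Statement 14: the complete numerical analysis of the system (sys1)–(eq1) in the proof
that every Killing `p`-form (`p ≥ 2`) on a compact quaternion-Kähler manifold is
parallel.
-/

/-- The eigenvalue `P(k, a, b, q)` of the operator `C` on the summand
`Sym^kH⊗Λ^{a,b}₀E` of `Λ^q`, for quaternionic dimension `m`:
`P(k, a, b, q) = ¼(q(4m − q + 6) − k(k+2) − 4b + 2a² + 2b² − 4(a+b)(m+1))`. -/
def Pval (m k a b q : ℤ) : ℚ :=
  (1 / 4 : ℚ) * ((q : ℚ) * (4 * (m : ℚ) - (q : ℚ) + 6) - (k : ℚ) * ((k : ℚ) + 2)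
    - 4 * (b : ℚ) + 2 * (a : ℚ) ^ 2 + 2 * (b : ℚ) ^ 2
    - 4 * ((a : ℚ) + (b : ℚ)) * ((m : ℚ) + 1))

theorem killing_form_numerical_analysis
    (m p k a b k' a' b' : ℤ) (hm : 2 ≤ m) (hp : 2 ≤ p)
    (hk : 0 ≤ k) (ha : 0 ≤ a) (hb : 0 ≤ b)
    (hk' : 0 ≤ k') (ha' : 0 ≤ a') (hb' : 0 ≤ b')
    (hba : b ≤ a) (ham : a ≤ m)
    (h2b : 2 * b ≤ min (p - k) (4 * m - p - k))
    (h2a : 2 * a ≤ min (p + k) (4 * m - p + k))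
    (hba' : b' ≤ a') (ham' : a' ≤ m)
    (h2b' : 2 * b' ≤ min (p + 1 - k') (4 * m - p - 1 - k'))
    (h2a' : 2 * a' ≤ min (p + 1 + k') (4 * m - p - 1 + k'))
    (hkk' : |k - k'| = 1) (hab' : |a - a'| + |b - b'| = 1)
    (hsys1 : ((p : ℚ) + 1) * (-(k : ℚ) * ((k : ℚ) + 2) + 3)
        = ((p : ℚ) - 1) * (-(k' : ℚ) * ((k' : ℚ) + 2)))
    (hsys2 : ((p : ℚ) + 1) * Pval m k a b p = ((p : ℚ) - 1) * Pval m k' a' b' (p + 1))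
    (hsys3 : -2 * Pval m k' a' b' (p + 1) + (-(k' : ℚ) * ((k' : ℚ) + 2))
        + 3 * ((p : ℚ) + 1) = 0) :
    k = 1 ∧ k' = 0 ∧ b' = b ∧ a' = a - 1 ∧ 4 * m - p = 2 * a - 1 ∧ 2 * m + 1 ≤ p := by
  -- integer versions of the three equations
  have H1 : (p + 1) * (-(k * (k + 2)) + 3) = (p - 1) * (-(k' * (k' + 2))) := by
    have h : (((p + 1) * (-(k * (k + 2)) + 3) : ℤ) : ℚ)
        = (((p - 1) * (-(k' * (k' + 2))) : ℤ) : ℚ) := by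
      push_cast
      linear_combination hsys1
    exact_mod_cast h
  simp only [Pval] at hsys2 hsys3
  push_cast at hsys2 hsys3
  have H2 : (p + 1) * (p * (4 * m - p + 6) - k * (k + 2) - 4 * b + 2 * a ^ 2 + 2 * b ^ 2
        - 4 * (a + b) * (m + 1))
      = (p - 1) * ((p + 1) * (4 * m - (p + 1) + 6) - k' * (k' + 2) - 4 * b' + 2 * a' ^ 2
        + 2 * b' ^ 2 - 4 * (a' + b') * (m + 1)) := by
    have h : (((p + 1) * (p * (4 * m - p + 6) - k * (k + 2) - 4 * b + 2 * a ^ 2 + 2 * b ^ 2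
          - 4 * (a + b) * (m + 1)) : ℤ) : ℚ)
        = (((p - 1) * ((p + 1) * (4 * m - (p + 1) + 6) - k' * (k' + 2) - 4 * b' + 2 * a' ^ 2
          + 2 * b' ^ 2 - 4 * (a' + b') * (m + 1)) : ℤ) : ℚ) := by
      push_cast
      linear_combination 4 * hsys2
    exact_mod_cast h
  have H3 : -((p + 1) * (4 * m - (p + 1) + 6) - k' * (k' + 2) - 4 * b' + 2 * a' ^ 2
        + 2 * b' ^ 2 - 4 * (a' + b') * (m + 1)) + 2 * (-(k' * (k' + 2))) + 6 * (p + 1)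
      = 0 := by
    have h : ((-((p + 1) * (4 * m - (p + 1) + 6) - k' * (k' + 2) - 4 * b' + 2 * a' ^ 2
          + 2 * b' ^ 2 - 4 * (a' + b') * (m + 1)) + 2 * (-(k' * (k' + 2))) + 6 * (p + 1)
          : ℤ) : ℚ) = ((0 : ℤ) : ℚ) := by
      push_cast
      linear_combination 2 * hsys3
    exact_mod_cast h
  have hb1 : 2 * b ≤ p - k := le_trans h2b (min_le_left _ _)
  have hb2 : 2 * b ≤ 4 * m - p - k := le_trans h2b (min_le_right _ _)
  have ha1 : 2 * a ≤ p + k := le_trans h2a (min_le_left _ _)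
  have hb1' : 2 * b' ≤ p + 1 - k' := le_trans h2b' (min_le_left _ _)
  rcases (abs_eq (by norm_num : (0:ℤ) ≤ 1)).mp hkk' with hdk | hdk
  · -- k = k' + 1 : then k = 1, k' = 0
    have hke : k = k' + 1 := by omega
    subst hke
    have h0 : -k' * (2 * p + 2 * k' + 6) = 0 := by linear_combination H1
    have hk0 : k' = 0 := by
      rcases mul_eq_zero.mp h0 with h | h <;> omega
    subst hk0
    have hI : (p + 1) * (4 * m - p - 1) - 4 * b' + 2 * a' ^ 2 + 2 * b' ^ 2
        - 4 * (a' + b') * (m + 1) = 0 := by linear_combination -H3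
    have hIIm : (p + 1) * (p * (4 * m - p) - 4 * b + 2 * a ^ 2 + 2 * b ^ 2
        - 4 * (a + b) * (m + 1) + 3) = 0 := by linear_combination H2 - (p - 1) * H3
    have hII : p * (4 * m - p) - 4 * b + 2 * a ^ 2 + 2 * b ^ 2
        - 4 * (a + b) * (m + 1) + 3 = 0 :=
      (mul_eq_zero.mp hIIm).resolve_left (by omega)
    have hcases : (a' = a + 1 ∧ b' = b) ∨ (a' = a - 1 ∧ b' = b)
        ∨ (a' = a ∧ b' = b + 1) ∨ (a' = a ∧ b' = b - 1) := by
      rcases abs_cases (a - a') with ⟨e1, e1'⟩ | ⟨e1, e1'⟩ <;>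
        rcases abs_cases (b - b') with ⟨e2, e2'⟩ | ⟨e2, e2'⟩ <;>
        rw [e1, e2] at hab' <;> omega
    rcases hcases with ⟨e1, e2⟩ | ⟨e1, e2⟩ | ⟨e1, e2⟩ | ⟨e1, e2⟩ <;> subst e1 <;> subst e2
    · -- a' = a + 1 : contradiction with 2a ≤ p + 1
      exfalso
      have h4 : 2 * (2 * a - p - 3) = 0 := by linear_combination hI - hII
      omega
    · -- a' = a - 1 : the actual case
      have h4 : 2 * (4 * m - p - 2 * a + 1) = 0 := by linear_combination hI - hII
      refine ⟨rfl, rfl, rfl, rfl, by omega, by omega⟩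
    · exfalso
      have h4 : 2 * (2 * b - p - 5) = 0 := by linear_combination hI - hII
      omega
    · exfalso
      have h4 : 2 * (4 * m - p - 2 * b + 3) = 0 := by linear_combination hI - hII
      omega
  · -- k' = k + 1 : then k = p, ruled out
    exfalso
    have hke : k' = k + 1 := by omega
    subst hke
    have h0 : 2 * (k + 3) * (p - k) = 0 := by linear_combination H1
    have hkp : k = p := by
      rcases mul_eq_zero.mp h0 with h | h <;> omega
    subst hkp
    have hb0 : b = 0 := by omega
    have hb0' : b' = 0 := by omega
    subst hb0; subst hb0'
    have hii : 2 * (k + 1) * (a ^ 2 - 2 * a * (m + 1) + k * (2 * m + 1)) = 0 := by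
      linear_combination H2 - (k - 1) * H3
    have hii' : a ^ 2 - 2 * a * (m + 1) + k * (2 * m + 1) = 0 :=
      (mul_eq_zero.mp hii).resolve_left (by omega)
    have hi : 2 * (a' ^ 2 - 2 * a' * (m + 1) + (k + 1) * (2 * m + 1)) = 0 := by
      linear_combination -H3
    have hi' : a' ^ 2 - 2 * a' * (m + 1) + (k + 1) * (2 * m + 1) = 0 :=
      (mul_eq_zero.mp hi).resolve_left (by norm_num)
    have haa : a' = a + 1 ∨ a' = a - 1 := by
      rcases abs_cases (a - a') with ⟨e1, e1'⟩ | ⟨e1, e1'⟩ <;>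
        rcases abs_cases ((0:ℤ) - 0) with ⟨e2, e2'⟩ | ⟨e2, e2'⟩ <;>
        rw [e1, e2] at hab' <;> omega
    rcases haa with h | h <;> subst h
    · -- a' = a + 1 gives a = 0, then p(2m+1) = 0, absurd
      have h4 : 2 * a = 0 := by linear_combination hi' - hii'
      have ha0 : a = 0 := by omega
      subst ha0
      have h5 : k * (2 * m + 1) = 0 := by linear_combination hii'
      rcases mul_eq_zero.mp h5 with h | h <;> omega
    · -- a' = a - 1 gives 2a = 4m + 4 > 2m, absurd
      have h4 : 4 * m - 2 * a + 4 = 0 := by linear_combination hi' - hii'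
      omega
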